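/- Let K ⊆ ℝᵈ be a nonempty closed set, let {ξⁿ}_{n∈ℕ} ⊆ S^{d−1} be a countable dense subset of the set ψ* = {H ∈ S^{d−1} : H·y ≥ 0 ∀ y ∈ K} (assumed nonempty), and define ξ = Σ_{n=1}^∞ 2^{−n} ξⁿ. Then for every y ∈ K: (i) ξ·y ≥ 0; and (ii) if there exists H ∈ ψ* with H·y > 0, then ξ·y > 0. -/

import Mathlib

/-- The standard separator `ξ = Σ 2^{-(n+1)} ξⁿ`, built from a countable dense family of
the unit separating directions of a closed set `K`, weakly separates `K` and is strictly
positive on `y` whenever some separating direction is. -/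
theorem stmt9 {d : ℕ} (K : Set (EuclideanSpace ℝ (Fin d)))
    (hK : K.Nonempty) (hKc : IsClosed K)
    (ψs : Set (EuclideanSpace ℝ (Fin d)))
    (hψs : ψs = {H | ‖H‖ = 1 ∧ ∀ y ∈ K, 0 ≤ (inner ℝ H y : ℝ)})
    (hne : ψs.Nonempty)
    (ξs : ℕ → EuclideanSpace ℝ (Fin d))
    (hmem : ∀ n, ξs n ∈ ψs)
    (hdense : ∀ H ∈ ψs, ∀ ε > 0, ∃ n, ‖ξs n - H‖ < ε)
    (ξ : EuclideanSpace ℝ (Fin d))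
    (hξ : ξ = ∑' n : ℕ, ((2 : ℝ) ^ (n + 1))⁻¹ • ξs n) :
    ∀ y ∈ K, 0 ≤ (inner ℝ ξ y : ℝ) ∧
      ((∃ H ∈ ψs, 0 < (inner ℝ H y : ℝ)) → 0 < (inner ℝ ξ y : ℝ)) := by
  intro y hy
  set f : ℕ → EuclideanSpace ℝ (Fin d) := fun n => ((2 : ℝ) ^ (n + 1))⁻¹ • ξs n with hf
  have hnorm : ∀ n, ‖ξs n‖ = 1 := fun n => ((hψs ▸ hmem n).1)
  have hsum : Summable f := by
    apply Summable.of_norm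
    have : ∀ n, ‖f n‖ = ((2 : ℝ)⁻¹) ^ (n + 1) := by
      intro n
      rw [hf]
      simp [norm_smul, hnorm n, abs_of_nonneg, inv_pow]
    rw [funext this]
    exact (summable_geometric_of_lt_one (by norm_num) (by norm_num)).comp_injective
      (add_left_injective 1)
  set T : EuclideanSpace ℝ (Fin d) →L[ℝ] ℝ := (innerSL ℝ).flip y with hT
  have hTf : ∀ x, T x = (inner ℝ x y : ℝ) := fun x => rfl
  have hinner : (inner ℝ ξ y : ℝ) = ∑' n, ((2 : ℝ) ^ (n + 1))⁻¹ * (inner ℝ (ξs n) y : ℝ) := by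
    rw [hξ, ← hTf, T.map_tsum hsum]
    congr 1
    funext n
    rw [hf]
    simp [hTf, inner_smul_left]
  have hsumg : Summable (fun n => ((2 : ℝ) ^ (n + 1))⁻¹ * (inner ℝ (ξs n) y : ℝ)) := by
    have := hsum.map T T.continuous
    convert this using 2 with n
    rw [hf]
    simp [hTf, inner_smul_left]
  have hterm : ∀ n, 0 ≤ ((2 : ℝ) ^ (n + 1))⁻¹ * (inner ℝ (ξs n) y : ℝ) := by
    intro n
    have h2 := (hψs ▸ hmem n).2 y hy
    positivity
  constructor
  · rw [hinner]
    exact tsum_nonneg hterm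
  · rintro ⟨H, hH, hHy⟩
    have hyne : y ≠ 0 := by
      rintro rfl
      simp at hHy
    have hynorm : 0 < ‖y‖ := norm_pos_iff.mpr hyne
    obtain ⟨n, hn⟩ := hdense H hH ((inner ℝ H y : ℝ) / ‖y‖) (by positivity)
    have hxn : 0 < (inner ℝ (ξs n) y : ℝ) := by
      have h1 : (inner ℝ (ξs n) y : ℝ) = (inner ℝ H y : ℝ) + (inner ℝ (ξs n - H) y : ℝ) := by
        rw [inner_sub_left]; ring
      have h2 : |(inner ℝ (ξs n - H) y : ℝ)| ≤ ‖ξs n - H‖ * ‖y‖ := abs_real_inner_le_norm _ _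
      have h3 : ‖ξs n - H‖ * ‖y‖ < ((inner ℝ H y : ℝ) / ‖y‖) * ‖y‖ :=
        mul_lt_mul_of_pos_right hn hynorm
      have h4 : ((inner ℝ H y : ℝ) / ‖y‖) * ‖y‖ = (inner ℝ H y : ℝ) := by
        field_simp
      nlinarith [abs_le.mp h2]
    rw [hinner]
    exact Summable.tsum_pos hsumg hterm n (by positivity)
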